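/- There exists exactly one continuous function θ:[0,∞)→ℝ with θ(0)=−π/2 such that for every z≥0 there exists r>0 with r·cos(θ(z))=√z/Γ(3/4−z) and r·sin(θ(z))=−1/Γ(1/4−z). -/

import Mathlib

open Real Set

lemma contInvGamma : Continuous fun t : ℝ => (Real.Gamma t)⁻¹ := by
  have h1 : (fun t : ℝ => (Real.Gamma t)⁻¹)
      = fun t : ℝ => ((Complex.Gamma (t : ℂ))⁻¹).re := by
    funext t
    rw [Complex.Gamma_ofReal, ← Complex.ofReal_inv, Complex.ofReal_re]
  rw [h1]
  exact Complex.continuous_re.comp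
    (Complex.differentiable_one_div_Gamma.continuous.comp Complex.continuous_ofReal)

lemma invGamma_eq (s : ℝ) (hs : s < 1) :
    (Real.Gamma s)⁻¹ = Real.Gamma (1 - s) * Real.sin (π * s) / π := by
  by_cases h : ∀ m : ℕ, s ≠ -m
  · have hG : Real.Gamma s ≠ 0 := Real.Gamma_ne_zero h
    have hsin : Real.sin (π * s) ≠ 0 := by
      intro hz
      rw [Real.sin_eq_zero_iff] at hz
      obtain ⟨n, hn⟩ := hz
      have hsn : s = n := by
        have hpi := Real.pi_ne_zero
        have : π * (n : ℝ) = π * s := by linarith [hn]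
        exact (mul_left_cancel₀ hpi this).symm
      have hn1 : n < 1 := by exact_mod_cast hsn ▸ hs
      have hn0 : n ≤ 0 := by omega
      refine h (-n).toNat ?_
      rw [hsn]
      have h2 : ((-n).toNat : ℤ) = -n := Int.toNat_of_nonneg (by omega)
      have h3 : (((-n).toNat : ℤ) : ℝ) = ((-n : ℤ) : ℝ) := by rw [h2]
      push_cast at h3 ⊢
      linarith
    have key : Real.Gamma s * Real.Gamma (1 - s) * Real.sin (π * s) = π := by
      rw [Real.Gamma_mul_Gamma_one_sub]
      field_simp
    field_simp
    rw [mul_comm π s] at key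
    linarith [key]
  · push_neg at h
    obtain ⟨m, hm⟩ := h
    have h0 : Real.Gamma s = 0 := by rw [hm]; exact Real.Gamma_neg_nat_eq_zero m
    have hs0 : Real.sin (π * s) = 0 := by
      rw [hm]
      have : π * -(m : ℝ) = ((-(m : ℤ) : ℤ) : ℝ) * π := by push_cast; ring
      rw [this, Real.sin_int_mul_pi]
    rw [h0, hs0]
    simp

noncomputable def xf (z : ℝ) : ℝ := Real.sqrt z * (Real.Gamma (3/4 - z))⁻¹
noncomputable def yf (z : ℝ) : ℝ := -(Real.Gamma (1/4 - z))⁻¹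
noncomputable def phif (z : ℝ) : ℝ := π * z - π/4
noncomputable def Rf (z : ℝ) : ℝ := xf z * Real.cos (phif z) + yf z * Real.sin (phif z)
noncomputable def Jf (z : ℝ) : ℝ := yf z * Real.cos (phif z) - xf z * Real.sin (phif z)
noncomputable def thetaf (z : ℝ) : ℝ := phif z + Real.arctan (Jf z / Rf z)

lemma hxA (z : ℝ) (hz : 0 ≤ z) :
    xf z = (Real.sqrt z * Real.Gamma (1/4 + z) / π) * Real.cos (phif z) := by
  unfold xf phif
  rw [invGamma_eq (3/4 - z) (by linarith)]
  have h1 : (1 : ℝ) - (3/4 - z) = 1/4 + z := by ring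
  have h2 : Real.sin (π * (3/4 - z)) = Real.cos (π * z - π/4) := by
    rw [← Real.cos_pi_div_two_sub]
    ring_nf
  rw [h1, h2]; ring

lemma hyB (z : ℝ) (hz : 0 ≤ z) :
    yf z = (Real.Gamma (3/4 + z) / π) * Real.sin (phif z) := by
  unfold yf phif
  rw [invGamma_eq (1/4 - z) (by linarith)]
  have h1 : (1 : ℝ) - (1/4 - z) = 3/4 + z := by ring
  have h2 : Real.sin (π * (1/4 - z)) = -Real.sin (π * z - π/4) := by
    rw [← Real.sin_neg]
    ring_nf
  rw [h1, h2]; ring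

lemma hRpos (z : ℝ) (hz : 0 ≤ z) : 0 < Rf z := by
  have hB : 0 < Real.Gamma (3/4 + z) / π :=
    div_pos (Real.Gamma_pos_of_pos (by linarith)) Real.pi_pos
  have pyth := Real.sin_sq_add_cos_sq (phif z)
  rw [Rf, hxA z hz, hyB z hz]
  rcases eq_or_lt_of_le hz with h0 | h0
  · subst h0
    have hphi : phif 0 = -(π/4) := by unfold phif; ring
    have hs : Real.sin (phif 0) = -(Real.sqrt 2 / 2) := by
      rw [hphi, Real.sin_neg, Real.sin_pi_div_four]
    have h2 : (0:ℝ) < Real.sqrt 2 / 2 := by positivity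
    have h22 : Real.sqrt 2 * Real.sqrt 2 = 2 := Real.mul_self_sqrt (by norm_num)
    have hss : Real.sin (phif 0) * Real.sin (phif 0) = 1/2 := by
      rw [hs]; linear_combination h22 / 4
    rw [Real.sqrt_zero, hs]
    have h4 : Real.Gamma (3/4 + 0) / π * -(Real.sqrt 2/2) * -(Real.sqrt 2/2)
        = Real.Gamma (3/4 + 0) / π * (1/2) := by
      linear_combination (Real.Gamma (3/4 + 0) / π) * h22 / 4
    rw [h4]
    ring_nf
    ring_nf at hB
    linarith
  · have hA : 0 < Real.sqrt z * Real.Gamma (1/4 + z) / π :=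
      div_pos (mul_pos (Real.sqrt_pos.mpr h0) (Real.Gamma_pos_of_pos (by linarith))) Real.pi_pos
    set A := Real.sqrt z * Real.Gamma (1/4 + z) / π
    set B := Real.Gamma (3/4 + z) / π
    rcases le_total A B with h | h
    · nlinarith [mul_nonneg (sub_nonneg.2 h) (mul_self_nonneg (Real.sin (phif z)))]
    · nlinarith [mul_nonneg (sub_nonneg.2 h) (mul_self_nonneg (Real.cos (phif z)))]

lemma hSpos (z : ℝ) (hz : 0 ≤ z) : 0 < Real.sqrt (Rf z ^ 2 + Jf z ^ 2) := by
  have hR := hRpos z hz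
  apply Real.sqrt_pos.mpr
  nlinarith [sq_nonneg (Jf z)]

lemma hsqrt1t (z : ℝ) (hz : 0 ≤ z) :
    Real.sqrt (1 + (Jf z / Rf z) ^ 2) = Real.sqrt (Rf z ^ 2 + Jf z ^ 2) / Rf z := by
  have hR := hRpos z hz
  have h1 : 1 + (Jf z / Rf z) ^ 2 = (Rf z ^ 2 + Jf z ^ 2) / Rf z ^ 2 := by
    field_simp
  rw [h1, Real.sqrt_div (by positivity) _, Real.sqrt_sq hR.le]

lemma hmain (z : ℝ) (hz : 0 ≤ z) :
    Real.sqrt (Rf z ^ 2 + Jf z ^ 2) * Real.cos (thetaf z) = xf z ∧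
    Real.sqrt (Rf z ^ 2 + Jf z ^ 2) * Real.sin (thetaf z) = yf z := by
  have hR := hRpos z hz
  have hS := hSpos z hz
  have hsq := hsqrt1t z hz
  have pyth := Real.sin_sq_add_cos_sq (phif z)
  have key1 : Real.cos (phif z) * Rf z - Real.sin (phif z) * Jf z = xf z := by
    unfold Rf Jf
    linear_combination xf z * pyth
  have key2 : Real.sin (phif z) * Rf z + Real.cos (phif z) * Jf z = yf z := by
    unfold Rf Jf
    linear_combination yf z * pyth
  constructor
  · rw [thetaf, Real.cos_add, Real.cos_arctan, Real.sin_arctan, hsq]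
    field_simp
    linear_combination key1
  · rw [thetaf, Real.sin_add, Real.cos_arctan, Real.sin_arctan, hsq]
    field_simp
    linear_combination key2

lemma theta0 : thetaf 0 = -(π/2) := by
  have hy : yf 0 < 0 := by
    have h1 : (0:ℝ) < Real.Gamma (1/4 - 0) := Real.Gamma_pos_of_pos (by norm_num)
    unfold yf
    simp only [neg_lt, neg_zero] at *
    positivity
  have hphi : phif 0 = -(π/4) := by unfold phif; ring
  have hx0 : xf 0 = 0 := by unfold xf; rw [Real.sqrt_zero, zero_mul]
  have hs : Real.sin (phif 0) = -(Real.sqrt 2 / 2) := by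
    rw [hphi, Real.sin_neg, Real.sin_pi_div_four]
  have hc : Real.cos (phif 0) = Real.sqrt 2 / 2 := by
    rw [hphi, Real.cos_neg, Real.cos_pi_div_four]
  have hJ : Jf 0 = -Rf 0 := by unfold Jf Rf; rw [hx0, hs, hc]; ring
  have hrat : Jf 0 / Rf 0 = -1 := by
    rw [hJ, neg_div, div_self (hRpos 0 le_rfl).ne']
  have harctan : Real.arctan (-1) = -(π/4) := by
    rw [show (-1 : ℝ) = -(1:ℝ) by norm_num, Real.arctan_neg, Real.arctan_one]
  rw [thetaf, hrat, harctan, hphi]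
  ring

lemma contx : Continuous xf :=
  Real.continuous_sqrt.mul (contInvGamma.comp (continuous_const.sub continuous_id))

lemma conty : Continuous yf :=
  (contInvGamma.comp (continuous_const.sub continuous_id)).neg

lemma contphi : Continuous phif :=
  (continuous_const.mul continuous_id).sub continuous_const

lemma contR : Continuous Rf :=
  (contx.mul (Real.continuous_cos.comp contphi)).add
    (conty.mul (Real.continuous_sin.comp contphi))

lemma contJ : Continuous Jf :=
  (conty.mul (Real.continuous_cos.comp contphi)).sub
    (contx.mul (Real.continuous_sin.comp contphi))

lemma conttheta : ContinuousOn thetaf (Ici 0) :=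
  contphi.continuousOn.add (Real.continuous_arctan.comp_continuousOn
    (contJ.continuousOn.div contR.continuousOn fun z hz => (hRpos z hz).ne'))

lemma claimA (θ' : ℝ → ℝ)
    (hex' : ∀ z ≥ (0:ℝ), ∃ r > (0:ℝ),
      r * Real.cos (θ' z) = Real.sqrt z * (Real.Gamma (3/4 - z))⁻¹ ∧
      r * Real.sin (θ' z) = -(Real.Gamma (1/4 - z))⁻¹) :
    ∀ w ∈ Ici (0:ℝ), ∃ k : ℤ, θ' w = thetaf w + k * (2*π) := by
  intro w hw
  obtain ⟨r', hr'pos, hc1, hs1⟩ := hex' w hw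
  have hc1' : r' * Real.cos (θ' w) = xf w := hc1
  have hs1' : r' * Real.sin (θ' w) = yf w := hs1
  have hS := hSpos w hw
  have hm := hmain w hw
  have e1 : r' ^ 2 = xf w ^ 2 + yf w ^ 2 := by
    rw [← hc1', ← hs1']
    linear_combination (-(r' ^ 2)) * Real.sin_sq_add_cos_sq (θ' w)
  have e2 : Real.sqrt (Rf w ^ 2 + Jf w ^ 2) ^ 2 = xf w ^ 2 + yf w ^ 2 := by
    rw [← hm.1, ← hm.2]
    linear_combination (-(Real.sqrt (Rf w ^ 2 + Jf w ^ 2) ^ 2)) * Real.sin_sq_add_cos_sq (thetaf w)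
  have hr'S : r' = Real.sqrt (Rf w ^ 2 + Jf w ^ 2) := by
    rw [← Real.sqrt_sq hr'pos.le, e1, ← e2, Real.sqrt_sq hS.le]
  have hcos : Real.cos (θ' w) = Real.cos (thetaf w) := by
    apply mul_left_cancel₀ hS.ne'
    rw [hm.1, ← hr'S, hc1']
  have hsin : Real.sin (θ' w) = Real.sin (thetaf w) := by
    apply mul_left_cancel₀ hS.ne'
    rw [hm.2, ← hr'S, hs1']
  have hexp : Complex.exp (↑(θ' w) * Complex.I) = Complex.exp (↑(thetaf w) * Complex.I) := by
    rw [Complex.exp_mul_I, Complex.exp_mul_I, ← Complex.ofReal_cos, ← Complex.ofReal_sin,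
      ← Complex.ofReal_cos, ← Complex.ofReal_sin, hcos, hsin]
  obtain ⟨n, hn⟩ := Complex.exp_eq_exp_iff_exists_int.mp hexp
  refine ⟨n, ?_⟩
  have h2 : ((θ' w : ℂ)) * Complex.I = ((thetaf w + (n : ℝ) * (2*π) : ℝ) : ℂ) * Complex.I := by
    push_cast
    linear_combination hn
  have h3 := mul_right_cancel₀ Complex.I_ne_zero h2
  exact_mod_cast h3


/-- There exists exactly one continuous function `θ : [0,∞) → ℝ` with
`θ(0) = −π/2` such that for every `z ≥ 0` there is `r > 0` with
`r·cos(θ(z)) = √z/Γ(3/4−z)` and `r·sin(θ(z)) = −1/Γ(1/4−z)`. (Functions on `[0,∞)` are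
modelled as functions on `ℝ`; uniqueness is uniqueness of the values on `[0,∞)`.) -/
theorem stmt8 :
    ∃ θ : ℝ → ℝ,
      (ContinuousOn θ (Ici 0) ∧ θ 0 = -(π/2) ∧
        ∀ z ≥ (0:ℝ), ∃ r > (0:ℝ),
          r * Real.cos (θ z) = Real.sqrt z * (Real.Gamma (3/4 - z))⁻¹ ∧
          r * Real.sin (θ z) = -(Real.Gamma (1/4 - z))⁻¹) ∧
      ∀ θ' : ℝ → ℝ,
        (ContinuousOn θ' (Ici 0) ∧ θ' 0 = -(π/2) ∧
          ∀ z ≥ (0:ℝ), ∃ r > (0:ℝ),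
            r * Real.cos (θ' z) = Real.sqrt z * (Real.Gamma (3/4 - z))⁻¹ ∧
            r * Real.sin (θ' z) = -(Real.Gamma (1/4 - z))⁻¹) →
        ∀ z ≥ (0:ℝ), θ' z = θ z := by
  refine ⟨thetaf, ⟨conttheta, theta0, fun z hz =>
    ⟨Real.sqrt (Rf z ^ 2 + Jf z ^ 2), hSpos z hz, (hmain z hz).1, (hmain z hz).2⟩⟩, ?_⟩
  rintro θ' ⟨hc', h0', hex'⟩ z hz
  have hA := claimA θ' hex'
  set g : ℝ → ℝ := fun w => (θ' w - thetaf w) / (2*π) with hgdef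
  have hgc : ContinuousOn g (Ici 0) := (hc'.sub conttheta).div_const _
  have hpi := Real.pi_ne_zero
  have hint : ∀ w ∈ Ici (0:ℝ), ∃ k : ℤ, g w = k := by
    intro w hw
    obtain ⟨k, hk⟩ := hA w hw
    refine ⟨k, ?_⟩
    simp only [hgdef, hk]
    field_simp
    ring
  have hg0 : g 0 = 0 := by
    simp only [hgdef, h0', theta0, sub_self, zero_div]
  obtain ⟨k, hk⟩ := hint z hz
  have hk0 : k = 0 := by
    by_contra hne
    have hT : IsPreconnected (g '' (Ici 0)) := isPreconnected_Ici.image g hgc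
    have hord := hT.ordConnected
    have h0T : (0:ℝ) ∈ g '' (Ici 0) := ⟨0, self_mem_Ici, hg0⟩
    have hkT : ((k:ℝ)) ∈ g '' (Ici 0) := ⟨z, hz, hk⟩
    have hhalf : ∃ w ∈ Ici (0:ℝ), g w = 1/2 ∨ g w = -(1/2) := by
      rcases (Ne.lt_or_gt hne) with hneg | hpos
      · have hk1 : (k:ℝ) ≤ -1 := by
          have h9 : k ≤ -1 := by omega
          exact_mod_cast h9
        have hmem : (-(1/2) : ℝ) ∈ Icc ((k:ℝ)) 0 := ⟨by linarith, by norm_num⟩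
        obtain ⟨w, hw, hgw⟩ := hord.out hkT h0T hmem
        exact ⟨w, hw, Or.inr hgw⟩
      · have hk1 : (1:ℝ) ≤ (k:ℝ) := by
          have h9 : 1 ≤ k := by omega
          exact_mod_cast h9
        have hmem : ((1/2) : ℝ) ∈ Icc (0:ℝ) ((k:ℝ)) := ⟨by norm_num, by linarith⟩
        obtain ⟨w, hw, hgw⟩ := hord.out h0T hkT hmem
        exact ⟨w, hw, Or.inl hgw⟩
    obtain ⟨w, hw, hgw⟩ := hhalf
    obtain ⟨m, hm⟩ := hint w hw
    rcases hgw with hgw | hgw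
    · rw [hm] at hgw
      have : (2*m : ℤ) = (1 : ℤ) := by
        have : (2:ℝ) * (m:ℝ) = 1 := by linarith
        exact_mod_cast this
      omega
    · rw [hm] at hgw
      have : (2*m : ℤ) = (-1 : ℤ) := by
        have : (2:ℝ) * (m:ℝ) = -1 := by linarith
        exact_mod_cast this
      omega
  rw [hk0] at hk
  simp only [hgdef, Int.cast_zero] at hk
  rcases div_eq_zero_iff.mp hk with h | h
  · linarith [sub_eq_zero.mp h]
  · exact absurd h (by positivity)
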